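/- For every graph G, the safe number and connected safe number satisfy s(G) ≤ cs(G) ≤ 2·s(G) − 1. -/

import Mathlib

variable {V : Type*}

/-- Two vertex sets are adjacent if some edge joins them. -/
def SetsAdj (G : SimpleGraph V) (A B : Set V) : Prop :=
  ∃ a ∈ A, ∃ b ∈ B, G.Adj a b

/-- `u` and `v` are connected inside the induced subgraph `G[S]`. -/
def ReachIn (G : SimpleGraph V) (S : Set V) (u v : V) : Prop :=
  ∃ (hu : u ∈ S) (hv : v ∈ S), (G.induce S).Reachable ⟨u, hu⟩ ⟨v, hv⟩

/-- `C` is (the vertex set of) a connected component of the induced subgraph `G[S]`. -/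
def IsCompOf (G : SimpleGraph V) (S C : Set V) : Prop :=
  ∃ v ∈ S, C = {u | ReachIn G S u v}

/-- A safe set: nonempty, and no component of `G[S]` is adjacent to a larger
component of `G - S`. -/
def IsSafeSet (G : SimpleGraph V) (S : Set V) : Prop :=
  S.Nonempty ∧ ∀ C D : Set V, IsCompOf G S C → IsCompOf G Sᶜ D →
    SetsAdj G C D → D.ncard ≤ C.ncard

/-- A connected safe set. -/
def IsConnSafeSet (G : SimpleGraph V) (S : Set V) : Prop :=
  IsSafeSet G S ∧ (G.induce S).Connected

/-- The safe number: minimum size of a safe set. -/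
noncomputable def sNum (G : SimpleGraph V) : ℕ :=
  sInf {n | ∃ S : Set V, IsSafeSet G S ∧ S.ncard = n}

/-- The connected safe number: minimum size of a connected safe set. -/
noncomputable def csNum (G : SimpleGraph V) : ℕ :=
  sInf {n | ∃ S : Set V, IsConnSafeSet G S ∧ S.ncard = n}

namespace SafeAux

variable {G : SimpleGraph V} {A B S M : Set V} {u v x : V}

/-! ### Basic facts about `ReachIn` -/

lemma reachIn_iff :
    ReachIn G A u v ↔ ∃ w : G.Walk u v, ∀ y ∈ w.support, y ∈ A := by
  constructor
  · rintro ⟨hu, hv, ⟨w⟩⟩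
    refine ⟨w.map (SimpleGraph.Embedding.induce A).toHom, ?_⟩
    intro y hy
    have hy : y ∈ (w.map (SimpleGraph.Embedding.induce A).toHom).support := hy
    rw [SimpleGraph.Walk.support_map] at hy
    obtain ⟨⟨z, hz⟩, -, rfl⟩ := List.mem_map.mp hy
    exact hz
  · rintro ⟨w, hw⟩
    refine ⟨hw u w.start_mem_support, hw v w.end_mem_support, ?_⟩
    induction w with
    | nil => rfl
    | @cons a b c h p ih =>
      have hb : b ∈ A := hw b (by simp)
      have step : (G.induce A).Adj ⟨a, hw a (by simp)⟩ ⟨b, hb⟩ := h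
      exact (step.reachable).trans (ih (fun y hy => hw y (by simp [hy])))

lemma reachIn_refl (h : u ∈ A) : ReachIn G A u u := ⟨h, h, SimpleGraph.Reachable.refl _⟩

lemma reachIn_symm (h : ReachIn G A u v) : ReachIn G A v u := by
  obtain ⟨hu, hv, h⟩ := h; exact ⟨hv, hu, h.symm⟩

lemma reachIn_trans (h : ReachIn G A u v) (h' : ReachIn G A v x) : ReachIn G A u x := by
  obtain ⟨hu, hv, h⟩ := h; obtain ⟨hv', hx, h'⟩ := h'
  exact ⟨hu, hx, h.trans h'⟩

lemma reachIn_mem_left (h : ReachIn G A u v) : u ∈ A := h.1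

lemma reachIn_mem_right (h : ReachIn G A u v) : v ∈ A := h.2.1

lemma reachIn_mono (hAB : A ⊆ B) (h : ReachIn G A u v) : ReachIn G B u v := by
  rw [reachIn_iff] at h ⊢
  obtain ⟨w, hw⟩ := h
  exact ⟨w, fun y hy => hAB (hw y hy)⟩

lemma reachIn_adj (h : G.Adj u v) (hu : u ∈ A) (hv : v ∈ A) : ReachIn G A u v := by
  rw [reachIn_iff]
  exact ⟨SimpleGraph.Walk.cons h SimpleGraph.Walk.nil, by
    intro y hy
    simp only [SimpleGraph.Walk.support_cons, SimpleGraph.Walk.support_nil,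
      List.mem_cons, List.mem_singleton] at hy
    rcases hy with rfl | rfl | h
    · exact hu
    · exact hv
    · exact absurd h List.not_mem_nil⟩

/-! ### Connectivity of a set inside `G` -/

/-- `M` is nonempty and any two of its vertices are joined by a walk inside `M`. -/
def ConnIn (G : SimpleGraph V) (M : Set V) : Prop :=
  M.Nonempty ∧ ∀ u ∈ M, ∀ v ∈ M, ReachIn G M u v

lemma ConnIn.induce_connected (h : ConnIn G M) : (G.induce M).Connected := by
  obtain ⟨⟨m, hm⟩, h2⟩ := h
  rw [SimpleGraph.connected_iff]
  refine ⟨?_, ⟨⟨m, hm⟩⟩⟩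
  rintro ⟨a, ha⟩ ⟨b, hb⟩
  obtain ⟨_, _, r⟩ := h2 a ha b hb
  exact r

lemma ConnIn.mono_reach (h : ConnIn G M) (hMB : M ⊆ B) (hu : u ∈ M) (hv : v ∈ M) :
    ReachIn G B u v := reachIn_mono hMB (h.2 u hu v hv)

/-! ### Components -/

/-- The component of `x` in `G[A]`, as a vertex set. -/
def compOf (G : SimpleGraph V) (A : Set V) (x : V) : Set V := {u | ReachIn G A u x}

lemma mem_compOf_self (hx : x ∈ A) : x ∈ compOf G A x := reachIn_refl hx

lemma isCompOf_compOf (hx : x ∈ A) : IsCompOf G A (compOf G A x) := ⟨x, hx, rfl⟩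

lemma compOf_subset : compOf G A x ⊆ A := fun _ hu => reachIn_mem_left hu

lemma isCompOf_subset (h : IsCompOf G A S) : S ⊆ A := by
  obtain ⟨v, hv, rfl⟩ := h; exact fun _ hu => reachIn_mem_left hu

lemma isCompOf_nonempty (h : IsCompOf G A S) : S.Nonempty := by
  obtain ⟨v, hv, rfl⟩ := h; exact ⟨v, reachIn_refl hv⟩

lemma isCompOf_eq_compOf (h : IsCompOf G A S) (hu : u ∈ S) : S = compOf G A u := by
  obtain ⟨v, hv, rfl⟩ := h
  have huv : ReachIn G A u v := hu
  ext y
  constructor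
  · intro hy; exact reachIn_trans hy (reachIn_symm huv)
  · intro hy; exact reachIn_trans hy huv

lemma isCompOf_eq_of_mem (h : IsCompOf G A S) (h' : IsCompOf G A B) (hu : u ∈ S)
    (hu' : u ∈ B) : S = B := by
  rw [isCompOf_eq_compOf h hu, isCompOf_eq_compOf h' hu']

lemma connIn_compOf (hx : x ∈ A) : ConnIn G (compOf G A x) := by
  classical
  refine ⟨⟨x, mem_compOf_self hx⟩, ?_⟩
  intro u hu v hv
  have huv : ReachIn G A u v := reachIn_trans hu (reachIn_symm hv)
  rw [reachIn_iff] at huv ⊢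
  obtain ⟨w, hw⟩ := huv
  refine ⟨w, fun y hy => ?_⟩
  have : ReachIn G A u y := by
    rw [reachIn_iff]
    exact ⟨w.takeUntil y hy, fun z hz => hw z (w.support_takeUntil_subset hy hz)⟩
  exact reachIn_trans (reachIn_symm this) hu

/-- Every component of the complement of a nonempty set in a connected graph is
adjacent to some component of the set. -/
lemma exits : ∀ {d s : V} (_ : G.Walk d s), d ∉ S → s ∈ S →
    ∃ a b, a ∉ S ∧ b ∈ S ∧ G.Adj a b ∧ ReachIn G Sᶜ d a
  | d, _, SimpleGraph.Walk.nil, hd, hs => absurd hs hd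
  | d, s, @SimpleGraph.Walk.cons _ _ _ c _ h p, hd, hs => by
    by_cases hc : c ∈ S
    · exact ⟨d, c, hd, hc, h, reachIn_refl hd⟩
    · obtain ⟨a, b, ha, hb, hab, hr⟩ := exits p hc hs
      exact ⟨a, b, ha, hb, hab, reachIn_trans (reachIn_adj h hd hc) hr⟩

lemma comp_compl_le [Finite V] (hG : G.Connected) (hS : IsSafeSet G S) {D : Set V}
    (hD : IsCompOf G Sᶜ D) : D.ncard ≤ S.ncard := by
  obtain ⟨d, hd, rfl⟩ := hD
  obtain ⟨s, hs⟩ := hS.1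
  obtain ⟨w⟩ := hG.preconnected d s
  obtain ⟨a, b, ha, hb, hab, hr⟩ := exits w hd hs
  have hDadj : SetsAdj G (compOf G S b) (compOf G Sᶜ d) :=
    ⟨b, mem_compOf_self hb, a, reachIn_symm hr, hab.symm⟩
  have h1 : (compOf G Sᶜ d).ncard ≤ (compOf G S b).ncard :=
    hS.2 _ _ (isCompOf_compOf hb) (isCompOf_compOf hd) hDadj
  exact h1.trans (Set.ncard_le_ncard compOf_subset (Set.toFinite S))

/-! ### Walk surgery -/

/-- From a walk ending in `S \ M`, extract a walk from (essentially) `M` to a first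
vertex of `S \ M` avoiding `M` and `S` in between. -/
lemma extract : ∀ {a b : V} (_ : G.Walk a b), b ∈ S \ M →
    ∃ x ∈ S \ M, ∃ m', (m' ∈ M ∨ m' = a) ∧ ∃ w' : G.Walk m' x,
      ∀ y ∈ w'.support, y = m' ∨ (y ∉ M ∧ (y = x ∨ y ∉ S)) := by
  intro a b w
  induction w with
  | @nil a =>
    intro hb
    refine ⟨a, hb, a, Or.inr rfl, SimpleGraph.Walk.nil, ?_⟩
    intro y hy
    simp only [SimpleGraph.Walk.support_nil, List.mem_singleton] at hy
    exact Or.inl hy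
  | @cons a c b h p ih =>
    intro hb
    obtain ⟨x, hx, m', hm', w', hw'⟩ := ih hb
    rcases hm' with hm' | rfl
    · exact ⟨x, hx, m', Or.inl hm', w', hw'⟩
    · by_cases hcM : m' ∈ M
      · exact ⟨x, hx, m', Or.inl hcM, w', hw'⟩
      · by_cases hcS : m' ∈ S
        · -- `m'` itself is a first vertex of `S \ M`
          refine ⟨m', ⟨hcS, hcM⟩, a, Or.inr rfl,
            SimpleGraph.Walk.cons h SimpleGraph.Walk.nil, ?_⟩
          intro y hy
          simp only [SimpleGraph.Walk.support_cons, SimpleGraph.Walk.support_nil,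
            List.mem_cons, List.mem_singleton] at hy
          rcases hy with rfl | rfl | hy
          · exact Or.inl rfl
          · exact Or.inr ⟨hcM, Or.inl rfl⟩
          · exact absurd hy List.not_mem_nil
        · -- `c` is free; extend the walk by the edge `a-c`
          refine ⟨x, hx, a, Or.inr rfl, SimpleGraph.Walk.cons h w', ?_⟩
          intro y hy
          rw [SimpleGraph.Walk.support_cons, List.mem_cons] at hy
          rcases hy with rfl | hy
          · exact Or.inl rfl
          · rcases hw' y hy with rfl | hgood
            · exact Or.inr ⟨hcM, Or.inr hcS⟩
            · exact Or.inr hgood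

/-- All interior vertices of a path from outside `S` to `x ∈ S`, staying outside `S`,
reach (inside `Sᶜ`) a common vertex `z` outside `S` adjacent to `x`. -/
lemma mid2 {x : V} : ∀ {c : V} (w : G.Walk c x), w.IsPath → c ∉ S → x ∈ S →
    (∀ y ∈ w.support, y = x ∨ y ∉ S) →
    ∃ z, z ∉ S ∧ G.Adj z x ∧ ∀ y ∈ w.support, y ≠ x → ReachIn G Sᶜ y z := by
  intro c w
  induction w with
  | nil => intro _ hc hx _; exact absurd hx hc
  | @cons a d x' h p ih =>
    intro hp hc hx hcond
    by_cases hd : d ∈ S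
    · -- then `d = x'` and `p` is the nil walk
      have hdx : d = x' := by
        rcases hcond d (by simp) with h' | h'
        · exact h'
        · exact absurd hd h'
      subst hdx
      have hpnil : p = SimpleGraph.Walk.nil := by
        rw [← SimpleGraph.Walk.isPath_iff_eq_nil]
        exact hp.of_cons
      subst hpnil
      refine ⟨a, hc, h, ?_⟩
      intro y hy hyx
      simp only [SimpleGraph.Walk.support_cons, SimpleGraph.Walk.support_nil,
        List.mem_cons, List.mem_singleton] at hy
      rcases hy with rfl | rfl | hy
      · exact reachIn_refl hc
      · exact absurd rfl hyx
      · exact absurd hy List.not_mem_nil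
    · have hcond' : ∀ y ∈ p.support, y = x' ∨ y ∉ S := fun y hy => hcond y (by simp [hy])
      obtain ⟨z, hz, hzx, hreach⟩ := ih hp.of_cons hd hx hcond'
      refine ⟨z, hz, hzx, ?_⟩
      intro y hy hyx
      rw [SimpleGraph.Walk.support_cons, List.mem_cons] at hy
      rcases hy with rfl | hy
      · have hdr : ReachIn G Sᶜ d z :=
          hreach d p.start_mem_support (fun hdx => hd (hdx ▸ hx))
        exact reachIn_trans (reachIn_adj h hc hd) hdr
      · exact hreach y hy hyx


/-! ### The interior of the connecting path is small -/

lemma interior_bound [Finite V] (hS : IsSafeSet G S) {m' x : V} (wp : G.Walk m' x)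
    (hpath : wp.IsPath) (hm'x : m' ≠ x) (hxS : x ∈ S)
    (hcond : ∀ y ∈ wp.support, y = m' ∨ (y = x ∨ y ∉ S)) {P : Set V}
    (hPsub : ∀ y ∈ P, y ∈ wp.support ∧ y ≠ m' ∧ y ∉ compOf G S x) :
    P.ncard ≤ (compOf G S x).ncard := by
  cases wp with
  | nil => exact absurd rfl hm'x
  | @cons _ c _ h p2 =>
    rw [SimpleGraph.Walk.cons_isPath_iff] at hpath
    obtain ⟨hp2path, hm'nots⟩ := hpath
    have hcm' : c ≠ m' := fun hc => hm'nots (hc ▸ p2.start_mem_support)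
    have hcx : c = x ∨ c ∉ S := by
      rcases hcond c (by simp) with h' | h'
      · exact absurd h' hcm'
      · exact h'
    have hcond2 : ∀ y ∈ p2.support, y = x ∨ y ∉ S := by
      intro y hy
      rcases hcond y (by simp [hy]) with rfl | h'
      · exact absurd hy hm'nots
      · exact h'
    rcases hcx with rfl | hcS
    · -- the walk is a single edge `m'-x`; `P` is empty
      have hp2nil : p2 = SimpleGraph.Walk.nil := by
        rw [← SimpleGraph.Walk.isPath_iff_eq_nil]
        exact hp2path
      subst hp2nil
      have hPempty : P = ∅ := by
        ext y
        simp only [Set.mem_empty_iff_false, iff_false]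
        intro hy
        obtain ⟨hysup, hym', hyC⟩ := hPsub y hy
        simp only [SimpleGraph.Walk.support_cons, SimpleGraph.Walk.support_nil,
          List.mem_cons, List.mem_singleton] at hysup
        rcases hysup with rfl | rfl | hf
        · exact hym' rfl
        · exact hyC (mem_compOf_self hxS)
        · exact List.not_mem_nil hf
      simp [hPempty]
    · obtain ⟨z, hz, hzx, hreach⟩ := mid2 p2 hp2path hcS hxS hcond2
      have hzc : z ∈ Sᶜ := hz
      have hDcomp : IsCompOf G Sᶜ (compOf G Sᶜ z) := isCompOf_compOf hzc
      have hadj : SetsAdj G (compOf G S x) (compOf G Sᶜ z) :=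
        ⟨x, mem_compOf_self hxS, z, mem_compOf_self hzc, hzx.symm⟩
      have hDC : (compOf G Sᶜ z).ncard ≤ (compOf G S x).ncard :=
        hS.2 _ _ (isCompOf_compOf hxS) hDcomp hadj
      have hPD : P ⊆ compOf G Sᶜ z := by
        intro y hy
        obtain ⟨hysup, hym', hyC⟩ := hPsub y hy
        have hyx : y ≠ x := fun hyx => hyC (by rw [hyx]; exact mem_compOf_self hxS)
        rw [SimpleGraph.Walk.support_cons, List.mem_cons] at hysup
        rcases hysup with rfl | hysup
        · exact absurd rfl hym'
        · exact hreach y hysup hyx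
      exact (Set.ncard_le_ncard hPD (Set.toFinite _)).trans hDC

/-! ### The growing invariant -/

/-- The invariant maintained while growing a connected superset of a safe set. -/
def Pack (G : SimpleGraph V) (S M : Set V) : Prop :=
  ConnIn G M ∧ (∀ C, IsCompOf G S C → (C ∩ M).Nonempty → C ⊆ M) ∧
    M.ncard + 1 ≤ 2 * (S ∩ M).ncard

lemma step [Finite V] (hG : G.Connected) (hS : IsSafeSet G S)
    (hM : Pack G S M) (hne : (S \ M).Nonempty) :
    ∃ M', Pack G S M' ∧ M ⊆ M' ∧ (S \ M').ncard < (S \ M).ncard := by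
  classical
  obtain ⟨hconn, hclosed, hcount⟩ := hM
  obtain ⟨m, hm⟩ := hconn.1
  obtain ⟨u0, hu0⟩ := hne
  obtain ⟨w0⟩ := hG.preconnected m u0
  obtain ⟨x, hx, m', hm', w1, hw1⟩ := extract w0 hu0
  have hm'M : m' ∈ M := by rcases hm' with h | rfl; exacts [h, hm]
  have hwpcond : ∀ y ∈ w1.bypass.support, y = m' ∨ (y ∉ M ∧ (y = x ∨ y ∉ S)) :=
    fun y hy => hw1 y (w1.support_bypass_subset hy)
  have hxS : x ∈ S := hx.1
  have hxM : x ∉ M := hx.2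
  set C := compOf G S x with hC
  have hCcomp : IsCompOf G S C := isCompOf_compOf hxS
  have hCM : ∀ y ∈ C, y ∉ M := by
    intro y hy hyM
    have hsub : C ⊆ M := hclosed C hCcomp ⟨y, hy, hyM⟩
    exact hxM (hsub (mem_compOf_self hxS))
  set P : Set V := {y | y ∈ w1.bypass.support ∧ y ∉ M ∧ y ∉ C} with hP
  set M' := M ∪ P ∪ C with hM'
  have hsupM' : ∀ y ∈ w1.bypass.support, y ∈ M' := by
    intro y hy
    rcases hwpcond y hy with rfl | ⟨hyM, _⟩
    · exact Or.inl (Or.inl hm'M)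
    · by_cases hyC : y ∈ C
      · exact Or.inr hyC
      · exact Or.inl (Or.inr ⟨hy, hyM, hyC⟩)
  have hMM' : M ⊆ M' := fun y hy => Or.inl (Or.inl hy)
  have hCM' : C ⊆ M' := fun y hy => Or.inr hy
  have hkey : ∀ y ∈ M', ReachIn G M' y m' := by
    intro y hy
    rcases hy with (hy | hy) | hy
    · exact hconn.mono_reach hMM' hy hm'M
    · refine reachIn_symm (reachIn_iff.mpr ⟨w1.bypass.takeUntil y hy.1, fun z hz => ?_⟩)
      exact hsupM' z (w1.bypass.support_takeUntil_subset hy.1 hz)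
    · have h1 : ReachIn G M' y x :=
        (connIn_compOf hxS).mono_reach hCM' hy (mem_compOf_self hxS)
      have h2 : ReachIn G M' m' x := reachIn_iff.mpr ⟨w1.bypass, hsupM'⟩
      exact reachIn_trans h1 (reachIn_symm h2)
  have hconn' : ConnIn G M' := ⟨⟨m', hMM' hm'M⟩, fun u hu v hv =>
    reachIn_trans (hkey u hu) (reachIn_symm (hkey v hv))⟩
  have hPS : ∀ y ∈ P, y ∉ S := by
    intro y hy
    obtain ⟨hys, hyM, hyC⟩ := hy
    rcases hwpcond y hys with rfl | ⟨_, h2⟩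
    · exact absurd hm'M hyM
    · rcases h2 with rfl | h2
      · exact absurd (mem_compOf_self hxS) hyC
      · exact h2
  have hclosed' : ∀ C'', IsCompOf G S C'' → (C'' ∩ M').Nonempty → C'' ⊆ M' := by
    rintro C'' hC'' ⟨z, hz1, hz2⟩
    rcases hz2 with (hz2 | hz2) | hz2
    · exact fun y hy => hMM' (hclosed C'' hC'' ⟨z, hz1, hz2⟩ hy)
    · exact absurd (isCompOf_subset hC'' hz1) (hPS z hz2)
    · have hEq : C'' = C := isCompOf_eq_of_mem hC'' hCcomp hz1 hz2
      exact hEq ▸ hCM'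
  have hPC : P.ncard ≤ C.ncard := by
    refine interior_bound hS w1.bypass (w1.bypass_isPath) (fun h => hxM (h ▸ hm'M)) hxS ?_ ?_
    · intro y hy
      rcases hwpcond y hy with rfl | ⟨_, h2⟩
      · exact Or.inl rfl
      · exact Or.inr h2
    · rintro y ⟨hy1, hy2, hy3⟩
      exact ⟨hy1, fun h => hy2 (h ▸ hm'M), hy3⟩
  have h1 : M'.ncard ≤ (M ∪ P).ncard + C.ncard := Set.ncard_union_le _ _
  have h1' : (M ∪ P).ncard ≤ M.ncard + P.ncard := Set.ncard_union_le _ _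
  have hdisj : Disjoint (S ∩ M) C := by
    rw [Set.disjoint_right]
    exact fun y hy hy' => hCM y hy hy'.2
  have hsub : (S ∩ M) ∪ C ⊆ S ∩ M' := by
    intro y hy
    rcases hy with hy | hy
    · exact ⟨hy.1, hMM' hy.2⟩
    · exact ⟨compOf_subset hy, hCM' hy⟩
  have h3 : (S ∩ M).ncard + C.ncard ≤ (S ∩ M').ncard := by
    rw [← Set.ncard_union_eq hdisj (Set.toFinite _) (Set.toFinite _)]
    exact Set.ncard_le_ncard hsub (Set.toFinite _)
  have hcount' : M'.ncard + 1 ≤ 2 * (S ∩ M').ncard := by omega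
  refine ⟨M', ⟨hconn', hclosed', hcount'⟩, hMM', ?_⟩
  have hssub : S \ M' ⊂ S \ M := by
    refine ⟨fun y hy => ⟨hy.1, fun h => hy.2 (hMM' h)⟩, fun h' => ?_⟩
    exact (h' ⟨hxS, hxM⟩).2 (hCM' (mem_compOf_self hxS))
  exact Set.ncard_lt_ncard hssub (Set.toFinite _)

lemma grow [Finite V] (hG : G.Connected) (hS : IsSafeSet G S) :
    ∀ (n : ℕ) (M : Set V), Pack G S M → (S \ M).ncard ≤ n →
    ∃ T, Pack G S T ∧ S ⊆ T := by
  intro n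
  induction n with
  | zero =>
    intro M hM h0
    have : S \ M = ∅ :=
      (Set.ncard_eq_zero (Set.toFinite (S \ M))).mp (Nat.le_zero.mp h0)
    exact ⟨M, hM, Set.diff_eq_empty.mp this⟩
  | succ n ih =>
    intro M hM hle
    by_cases h : (S \ M).Nonempty
    · obtain ⟨M', hM', _, hlt⟩ := step hG hS hM h
      exact ih M' hM' (by omega)
    · rw [Set.not_nonempty_iff_eq_empty] at h
      exact ⟨M, hM, Set.diff_eq_empty.mp h⟩

lemma exists_conn [Finite V] (hG : G.Connected) (hS : IsSafeSet G S) :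
    ∃ T, IsConnSafeSet G T ∧ T.ncard + 1 ≤ 2 * S.ncard := by
  obtain ⟨v0, hv0⟩ := hS.1
  have hM0 : Pack G S (compOf G S v0) := by
    refine ⟨connIn_compOf hv0, ?_, ?_⟩
    · rintro C hC ⟨z, hz1, hz2⟩
      have := isCompOf_eq_of_mem hC (isCompOf_compOf hv0) hz1 hz2
      exact this ▸ subset_rfl
    · have h1 : S ∩ compOf G S v0 = compOf G S v0 :=
        Set.inter_eq_self_of_subset_right compOf_subset
      have h2 : 0 < (compOf G S v0).ncard :=
        (Set.ncard_pos (Set.toFinite _)).mpr ⟨v0, mem_compOf_self hv0⟩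
      rw [h1]; omega
  obtain ⟨T, ⟨hTconn, _, hTcount⟩, hST⟩ :=
    grow hG hS (S \ compOf G S v0).ncard _ hM0 le_rfl
  have hSTcap : S ∩ T = S := Set.inter_eq_self_of_subset_left hST
  refine ⟨T, ⟨⟨hTconn.1, ?_⟩, hTconn.induce_connected⟩, by rw [hSTcap] at hTcount; omega⟩
  rintro C D ⟨v, hv, rfl⟩ ⟨d, hd, rfl⟩ _
  have hCT : {u | ReachIn G T u v} = T := by
    ext u
    exact ⟨fun h => reachIn_mem_left h, fun hu => hTconn.2 u hu v hv⟩
  rw [hCT]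
  have hdS : d ∈ Sᶜ := fun hdS => hd (hST hdS)
  have hDD' : {u | ReachIn G Tᶜ u d} ⊆ compOf G Sᶜ d :=
    fun u hu => reachIn_mono (Set.compl_subset_compl.mpr hST) hu
  calc {u | ReachIn G Tᶜ u d}.ncard ≤ (compOf G Sᶜ d).ncard :=
        Set.ncard_le_ncard hDD' (Set.toFinite _)
    _ ≤ S.ncard := comp_compl_le hG hS (isCompOf_compOf hdS)
    _ ≤ T.ncard := Set.ncard_le_ncard hST (Set.toFinite _)

end SafeAux

theorem stmt0 [Fintype V] (G : SimpleGraph V) (hG : G.Connected) :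
    sNum G ≤ csNum G ∧ csNum G ≤ 2 * sNum G - 1 := by
  classical
  have hne : Nonempty V := hG.nonempty
  have hconnuniv : SafeAux.ConnIn G Set.univ := by
    refine ⟨⟨Classical.arbitrary V, trivial⟩, fun u _ v _ => ?_⟩
    obtain ⟨w⟩ := hG.preconnected u v
    exact SafeAux.reachIn_iff.mpr ⟨w, fun _ _ => trivial⟩
  have hsafeuniv : IsSafeSet G (Set.univ : Set V) := by
    refine ⟨Set.univ_nonempty, fun C D _ hD _ => ?_⟩
    obtain ⟨v, hv, _⟩ := hD
    simp at hv
  have hsne : {n | ∃ S : Set V, IsSafeSet G S ∧ S.ncard = n}.Nonempty :=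
    ⟨(Set.univ : Set V).ncard, Set.univ, hsafeuniv, rfl⟩
  have hcsne : {n | ∃ S : Set V, IsConnSafeSet G S ∧ S.ncard = n}.Nonempty :=
    ⟨(Set.univ : Set V).ncard, Set.univ, ⟨hsafeuniv, hconnuniv.induce_connected⟩, rfl⟩
  constructor
  · obtain ⟨T, ⟨hTsafe, _⟩, hTcard⟩ := Nat.sInf_mem hcsne
    exact Nat.sInf_le ⟨T, hTsafe, hTcard⟩
  · obtain ⟨S, hSsafe, hScard⟩ := Nat.sInf_mem hsne
    obtain ⟨T, hTconn, hTbound⟩ := SafeAux.exists_conn hG hSsafe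
    have h1 : csNum G ≤ T.ncard := Nat.sInf_le ⟨T, hTconn, rfl⟩
    have h2 : S.ncard = sNum G := hScard
    omega
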